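/- With s and C as in the fake Casimir setup, [sC] = 2[sCC] holds, where [sC] = s_12C_13 + s_12C_23 + s_13C_23 + C_12s_13 + C_12s_23 + C_13s_23 − s_23C_13 − s_23C_12 − s_13C_12 − C_23s_13 − C_23s_12 − C_13s_12 and [sCC] = s_12C_13C_23 + C_12s_13C_23 + C_12C_13s_23 − s_23C_13C_12 − C_23s_13C_12 − C_23C_13s_12, as operators on (C^{(n|n)})^{⊗3}. -/

import Mathlib

open Matrix BigOperators

/-- Index set {±1,...,±n}: `Sum.inl k` represents the negative index −(k+1) (odd),
`Sum.inr k` represents the positive index k+1 (even). -/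
abbrev Idx (n : ℕ) := Fin n ⊕ Fin n

/-- parity: 1 for negative (odd) indices, 0 for positive (even) indices -/
def par {n : ℕ} : Idx n → ℕ
  | Sum.inl _ => 1
  | Sum.inr _ => 0

/-- negation i ↦ −i -/
def ng {n : ℕ} : Idx n → Idx n := Sum.swap

/-- absolute value -/
def ab {n : ℕ} : Idx n → ℕ
  | Sum.inl k => (k : ℕ) + 1
  | Sum.inr k => (k : ℕ) + 1

def ppos {n : ℕ} (k : Fin n) : Idx n := Sum.inr k
def nneg {n : ℕ} (k : Fin n) : Idx n := Sum.inl k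

/-- gl(n|n) as matrices indexed by {±1,...,±n} -/
abbrev gl (R : Type) [CommRing R] (n : ℕ) := Matrix (Idx n) (Idx n) R

variable (R : Type) [CommRing R] {n : ℕ}

/-- elementary matrix E_ij -/
def E (i j : Idx n) : gl R n := Matrix.single i j 1

/-- 𝖤_ij = E_ij − (−1)^{p(i)(p(j)+1)} E_{−j,−i} -/
def Em (i j : Idx n) : gl R n :=
  E R i j - ((-1 : R) ^ (par i * (par j + 1))) • E R (ng j) (ng i)

/-- projection onto the parity-d component -/
def proj (d : ℕ) (X : gl R n) : gl R n :=
  fun i j => if (par i + par j) % 2 = d % 2 then X i j else 0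

/-- the super bracket, extended bilinearly from homogeneous components:
[X,Y] = XY − (−1)^{|X||Y|} YX on homogeneous elements -/
def sbr (X Y : gl R n) : gl R n :=
  X * Y - (proj R 0 Y * proj R 0 X + proj R 0 Y * proj R 1 X
    + proj R 1 Y * proj R 0 X - proj R 1 Y * proj R 1 X)

/-- the involution ι(X) = −π(X^st) -/
def iota (X : gl R n) : gl R n :=
  fun a b => -((-1 : R) ^ (par (ng b) * (par (ng a) + 1))) * X (ng b) (ng a)

/-- X is homogeneous of parity d -/
def IsHom (d : ℕ) (X : gl R n) : Prop :=
  ∀ i j, (par i + par j) % 2 ≠ d % 2 → X i j = 0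

/-- supertrace -/
def Str (X : gl R n) : R := ∑ i, ((-1 : R) ^ (par i)) * X i i

/-- supertrace form B(X,Y) = Str(XY) -/
def BF (X Y : gl R n) : R := Str R (X * Y)

/-- generators of the butterfly subalgebra b_n -/
def bGen (n : ℕ) : Set (gl R n) :=
  {M | (∃ i j : Idx n, ab i < ab j ∧ M = E R i j) ∨
       (∃ k : Fin n, M = E R (ppos k) (ppos k) + E R (nneg k) (nneg k)) ∨
       (∃ k : Fin n, M = E R (ppos k) (nneg k))}

/-- operators on the super tensor square -/
abbrev M2 (R : Type) [CommRing R] (n : ℕ) := Matrix (Idx n × Idx n) (Idx n × Idx n) R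
/-- operators on the super tensor cube -/
abbrev M3 (R : Type) [CommRing R] (n : ℕ) :=
  Matrix (Idx n × Idx n × Idx n) (Idx n × Idx n × Idx n) R

/-- super (Koszul-signed) tensor product A ⊗ B of matrices as an operator on V ⊗ V:
(A⊗B)(e_c ⊗ e_d) = (−1)^{|B| p(c)} A e_c ⊗ B e_d -/
def kron2 (A B : gl R n) : M2 R n :=
  fun x y => ((-1 : R) ^ ((par x.2 + par y.2) * par y.1)) * A x.1 y.1 * B x.2 y.2

/-- M acting on factors 1,2 of the super tensor cube -/
def lift12 (M : M2 R n) : M3 R n :=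
  fun x y => if x.2.2 = y.2.2 then M (x.1, x.2.1) (y.1, y.2.1) else 0

/-- M acting on factors 1,3 of the super tensor cube (with Koszul signs) -/
def lift13 (M : M2 R n) : M3 R n :=
  fun x y => if x.2.1 = y.2.1 then
    ((-1 : R) ^ ((par x.2.2 + par y.2.2) * par x.2.1)) * M (x.1, x.2.2) (y.1, y.2.2) else 0

/-- M acting on factors 2,3 of the super tensor cube (with Koszul signs) -/
def lift23 (M : M2 R n) : M3 R n :=
  fun x y => if x.1 = y.1 then
    ((-1 : R) ^ ((par x.2.1 + par y.2.1 + par x.2.2 + par y.2.2) * par x.1)) * M x.2 y.2 else 0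

noncomputable section

/-- the fake Casimir element s as an operator on the super tensor square -/
def sEl (n : ℕ) : M2 ℂ n :=
  (∑ i : Idx n, ∑ j : Idx n,
    if ab j < ab i then ((-1 : ℂ) ^ (par j)) • kron2 ℂ (Em ℂ i j) (E ℂ j i) else 0)
  + (2 : ℂ)⁻¹ • (∑ k : Fin n,
      kron2 ℂ (Em ℂ (ppos k) (ppos k)) (E ℂ (ppos k) (ppos k) + E ℂ (nneg k) (nneg k)))
  + (2 : ℂ)⁻¹ • (∑ k : Fin n, kron2 ℂ (Em ℂ (nneg k) (ppos k)) (E ℂ (ppos k) (nneg k)))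

/-- C = Σ_{1≤i≤n} (E_ii + E_{−i,−i}) ⊗ (E_ii + E_{−i,−i}) -/
def CEl (n : ℕ) : M2 ℂ n :=
  ∑ k : Fin n, kron2 ℂ (E ℂ (ppos k) (ppos k) + E ℂ (nneg k) (nneg k))
    (E ℂ (ppos k) (ppos k) + E ℂ (nneg k) (nneg k))

namespace SCaux
variable {n : ℕ}

def idx {n : ℕ} : Idx n → Fin n
  | Sum.inl k => k
  | Sum.inr k => k

lemma ab_eq (i : Idx n) : ab i = (idx i : ℕ) + 1 := by cases i <;> rfl
lemma ab_ng (i : Idx n) : ab (ng i) = ab i := by cases i <;> rfl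
lemma sgn1 (p q : ℕ) : ((-1:ℂ)) ^ ((p + p) * q) = 1 := by
  rw [show (p+p)*q = 2*(p*q) by ring, pow_mul]; norm_num
lemma sgn2 (a b c : ℕ) : ((-1:ℂ)) ^ ((a + a + b + b) * c) = 1 := by
  rw [show (a+a+b+b)*c = 2*((a+b)*c) by ring, pow_mul]; norm_num

lemma Aapply (k : Fin n) (a b : Idx n) :
    (E ℂ (ppos k) (ppos k) + E ℂ (nneg k) (nneg k)) a b
      = if a = b ∧ idx a = k then 1 else 0 := by
  rcases a with a | a <;> rcases b with b | b <;>
    simp [E, ppos, nneg, Matrix.single, idx] <;> aesop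

lemma ab_eq_ab_iff (i j : Idx n) : ab i = ab j ↔ idx i = idx j := by
  rw [ab_eq, ab_eq, Fin.ext_iff]; omega

lemma CEl_apply (x y : Idx n × Idx n) :
    CEl n x y = if x = y ∧ ab x.1 = ab x.2 then 1 else 0 := by
  obtain ⟨x1, x2⟩ := x; obtain ⟨y1, y2⟩ := y
  simp only [CEl, Matrix.sum_apply, kron2, Aapply]
  by_cases h1 : x1 = y1
  · by_cases h2 : x2 = y2
    · subst h1; subst h2
      simp only [Prod.mk.injEq, and_self, true_and, sgn1, one_mul, if_true, eq_self_iff_true]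
      simp only [ab_eq_ab_iff]
      simp [mul_ite, ite_mul, Finset.sum_ite_eq, eq_comm]
    · simp [h2, Prod.ext_iff]
  · simp [h1, Prod.ext_iff]

noncomputable def χ (a b : ℕ) : ℂ := if a = b then 1 else 0

lemma lift12_CEl : lift12 ℂ (CEl n)
    = Matrix.diagonal (fun x : Idx n × Idx n × Idx n => χ (ab x.1) (ab x.2.1)) := by
  ext x y
  by_cases h : x = y
  · subst h
    simp [lift12, CEl_apply, χ]
  · rw [Matrix.diagonal_apply_ne _ h]
    simp only [lift12, CEl_apply]
    split_ifs with h1 h2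
    · exfalso; apply h; simp_all [Prod.ext_iff]
    · rfl
    · rfl

lemma lift13_CEl : lift13 ℂ (CEl n)
    = Matrix.diagonal (fun x : Idx n × Idx n × Idx n => χ (ab x.1) (ab x.2.2)) := by
  ext x y
  by_cases h : x = y
  · subst h
    simp [lift13, CEl_apply, χ, sgn1]
  · rw [Matrix.diagonal_apply_ne _ h]
    simp only [lift13, CEl_apply]
    split_ifs with h1 h2
    · exfalso; apply h; simp_all [Prod.ext_iff]
    · simp
    · rfl

lemma lift23_CEl : lift23 ℂ (CEl n)
    = Matrix.diagonal (fun x : Idx n × Idx n × Idx n => χ (ab x.2.1) (ab x.2.2)) := by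
  ext x y
  by_cases h : x = y
  · subst h
    simp [lift23, CEl_apply, χ, sgn2]
  · rw [Matrix.diagonal_apply_ne _ h]
    simp only [lift23, CEl_apply]
    split_ifs with h1 h2
    · exfalso; apply h; simp_all [Prod.ext_iff]
    · simp
    · rfl

lemma kz1 (i j : Idx n) (x y : Idx n × Idx n)
    (hA : ¬(ab x.1 = ab y.2 ∧ ab x.2 = ab y.1))
    (hB : ¬(ab x.1 = ab x.2 ∧ ab y.1 = ab y.2)) :
    kron2 ℂ (Em ℂ i j) (E ℂ j i) x y = 0 := by
  obtain ⟨x1, x2⟩ := x; obtain ⟨y1, y2⟩ := y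
  simp only [kron2, Em, E, Matrix.sub_apply, Matrix.smul_apply, Matrix.single,
    Matrix.of_apply, smul_eq_mul]
  by_cases h2 : j = x2 ∧ i = y2
  · obtain ⟨hj, hi⟩ := h2
    have c1 : ¬(i = x1 ∧ j = y1) := by
      rintro ⟨h1, h2'⟩
      exact hA ⟨by rw [← h1, ← hi], by rw [← h2', ← hj]⟩
    have c2 : ¬(ng j = x1 ∧ ng i = y1) := by
      rintro ⟨h1, h2'⟩
      refine hB ⟨?_, ?_⟩
      · rw [← h1, ab_ng, hj]
      · rw [← h2', ab_ng, hi]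
    simp [c1, c2]
  · simp [h2]

lemma kz2 (k : Fin n) (x y : Idx n × Idx n)
    (hB : ¬(ab x.1 = ab x.2 ∧ ab y.1 = ab y.2)) :
    kron2 ℂ (Em ℂ (ppos k) (ppos k)) (E ℂ (ppos k) (ppos k) + E ℂ (nneg k) (nneg k)) x y
      = 0 := by
  obtain ⟨x1, x2⟩ := x; obtain ⟨y1, y2⟩ := y
  simp only [kron2]
  rcases eq_or_ne ((E ℂ (ppos k) (ppos k) + E ℂ (nneg k) (nneg k)) x2 y2) 0 with h | h
  · rw [h, mul_zero]
  · rw [Aapply] at h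
    have h2 : x2 = y2 ∧ idx x2 = k := by by_contra hc; simp [hc] at h
    have hx2 : ab x2 = (k : ℕ) + 1 := by rw [ab_eq, h2.2]
    have hy2 : ab y2 = (k : ℕ) + 1 := by rw [← h2.1]; exact hx2
    have hEm : Em ℂ (ppos k) (ppos k) x1 y1 = 0 := by
      simp only [Em, E, Matrix.sub_apply, Matrix.smul_apply, Matrix.single,
        Matrix.of_apply, smul_eq_mul]
      have c1 : ¬((ppos k : Idx n) = x1 ∧ (ppos k : Idx n) = y1) := by
        rintro ⟨rfl, rfl⟩
        exact hB ⟨by rw [hx2]; rfl, by rw [hy2]; rfl⟩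
      have c2 : ¬((ng (ppos k) : Idx n) = x1 ∧ (ng (ppos k) : Idx n) = y1) := by
        rintro ⟨rfl, rfl⟩
        exact hB ⟨by rw [hx2]; rfl, by rw [hy2]; rfl⟩
      simp [c1, c2]
    rw [hEm, mul_zero, zero_mul]

lemma kz3 (k : Fin n) (x y : Idx n × Idx n)
    (hB : ¬(ab x.1 = ab x.2 ∧ ab y.1 = ab y.2)) :
    kron2 ℂ (Em ℂ (nneg k) (ppos k)) (E ℂ (ppos k) (nneg k)) x y = 0 := by
  obtain ⟨x1, x2⟩ := x; obtain ⟨y1, y2⟩ := y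
  simp only [kron2, Em, E, Matrix.sub_apply, Matrix.smul_apply, Matrix.single,
    Matrix.of_apply, smul_eq_mul]
  by_cases h2 : (ppos k : Idx n) = x2 ∧ (nneg k : Idx n) = y2
  · obtain ⟨rfl, rfl⟩ := h2
    have c1 : ¬((nneg k : Idx n) = x1 ∧ (ppos k : Idx n) = y1) := by
      rintro ⟨rfl, rfl⟩; exact hB ⟨rfl, rfl⟩
    have c2 : ¬((ng (ppos k) : Idx n) = x1 ∧ (ng (nneg k) : Idx n) = y1) := by
      rintro ⟨rfl, rfl⟩; exact hB ⟨rfl, rfl⟩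
    simp [c1, c2]
  · simp [h2]

lemma sEl_support (x y : Idx n × Idx n)
    (hA : ¬(ab x.1 = ab y.2 ∧ ab x.2 = ab y.1))
    (hB : ¬(ab x.1 = ab x.2 ∧ ab y.1 = ab y.2)) :
    sEl n x y = 0 := by
  have t1 : ∀ i j : Idx n, kron2 ℂ (Em ℂ i j) (E ℂ j i) x y = 0 :=
    fun i j => kz1 i j x y hA hB
  have t2 : ∀ k : Fin n,
      kron2 ℂ (Em ℂ (ppos k) (ppos k)) (E ℂ (ppos k) (ppos k) + E ℂ (nneg k) (nneg k)) x y
        = 0 := fun k => kz2 k x y hB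
  have t3 : ∀ k : Fin n, kron2 ℂ (Em ℂ (nneg k) (ppos k)) (E ℂ (ppos k) (nneg k)) x y = 0 :=
    fun k => kz3 k x y hB
  have ia : ∀ (c : Prop) [Decidable c] (M : M2 ℂ n) (u v : Idx n × Idx n),
      (if c then M else (0 : M2 ℂ n)) u v = if c then M u v else 0 := by
    intro c _ M u v; split_ifs <;> rfl
  simp [sEl, Matrix.sum_apply, Matrix.add_apply, Matrix.smul_apply, ia, t1, t2, t3]

lemma key12 (x y : Idx n × Idx n × Idx n) :
    lift12 ℂ (sEl n) x y *
      (χ (ab y.1) (ab y.2.2) + χ (ab y.2.1) (ab y.2.2) - χ (ab x.2.1) (ab x.2.2)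
        - χ (ab x.1) (ab x.2.2)
        - 2 * (χ (ab y.1) (ab y.2.2) * χ (ab y.2.1) (ab y.2.2))
        + 2 * (χ (ab x.2.1) (ab x.2.2) * χ (ab x.1) (ab x.2.2))) = 0 := by
  by_cases h3 : x.2.2 = y.2.2
  · by_cases hs : (ab x.1 = ab y.2.1 ∧ ab x.2.1 = ab y.1) ∨ (ab x.1 = ab x.2.1 ∧ ab y.1 = ab y.2.1)
    · apply mul_eq_zero_of_right
      have h3' : ab x.2.2 = ab y.2.2 := congrArg ab h3
      unfold χ
      rcases hs with ⟨h1, h2⟩ | ⟨h1, h2⟩ <;> split_ifs <;> first | ring1 | (exfalso; omega)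
    · obtain ⟨hA, hB⟩ := not_or.mp hs
      have h0 : sEl n (x.1, x.2.1) (y.1, y.2.1) = 0 := sEl_support _ _ hA hB
      simp [lift12, h3, h0]
  · simp [lift12, h3]

lemma key13 (x y : Idx n × Idx n × Idx n) :
    lift13 ℂ (sEl n) x y *
      (χ (ab y.2.1) (ab y.2.2) + χ (ab x.1) (ab x.2.1) - χ (ab y.1) (ab y.2.1)
        - χ (ab x.2.1) (ab x.2.2)
        - 2 * (χ (ab x.1) (ab x.2.1) * χ (ab y.2.1) (ab y.2.2))
        + 2 * (χ (ab x.2.1) (ab x.2.2) * χ (ab y.1) (ab y.2.1))) = 0 := by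
  by_cases h2 : x.2.1 = y.2.1
  · by_cases hs : (ab x.1 = ab y.2.2 ∧ ab x.2.2 = ab y.1) ∨ (ab x.1 = ab x.2.2 ∧ ab y.1 = ab y.2.2)
    · apply mul_eq_zero_of_right
      have h2' : ab x.2.1 = ab y.2.1 := congrArg ab h2
      unfold χ
      rcases hs with ⟨h1, h1'⟩ | ⟨h1, h1'⟩ <;> split_ifs <;> first | ring1 | (exfalso; omega)
    · obtain ⟨hA, hB⟩ := not_or.mp hs
      have h0 : sEl n (x.1, x.2.2) (y.1, y.2.2) = 0 := sEl_support _ _ hA hB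
      simp [lift13, h2, h0]
  · simp [lift13, h2]

lemma key23 (x y : Idx n × Idx n × Idx n) :
    lift23 ℂ (sEl n) x y *
      (χ (ab x.1) (ab x.2.1) + χ (ab x.1) (ab x.2.2) - χ (ab y.1) (ab y.2.2)
        - χ (ab y.1) (ab y.2.1)
        - 2 * (χ (ab x.1) (ab x.2.1) * χ (ab x.1) (ab x.2.2))
        + 2 * (χ (ab y.1) (ab y.2.2) * χ (ab y.1) (ab y.2.1))) = 0 := by
  by_cases h1 : x.1 = y.1
  · by_cases hs : (ab x.2.1 = ab y.2.2 ∧ ab x.2.2 = ab y.2.1) ∨ (ab x.2.1 = ab x.2.2 ∧ ab y.2.1 = ab y.2.2)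
    · apply mul_eq_zero_of_right
      have h1' : ab x.1 = ab y.1 := congrArg ab h1
      unfold χ
      rcases hs with ⟨ha, hb⟩ | ⟨ha, hb⟩ <;> split_ifs <;> first | ring1 | (exfalso; omega)
    · obtain ⟨hA, hB⟩ := not_or.mp hs
      have h0 : sEl n x.2 y.2 = 0 := sEl_support _ _ hA hB
      simp [lift23, h1, h0]
  · simp [lift23, h1]
end SCaux

open SCaux
/-- [sC] = 2[sCC]. -/
theorem sC_eq_two_sCC (n : ℕ) :
    lift12 ℂ (sEl n) * lift13 ℂ (CEl n) + lift12 ℂ (sEl n) * lift23 ℂ (CEl n)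
    + lift13 ℂ (sEl n) * lift23 ℂ (CEl n) + lift12 ℂ (CEl n) * lift13 ℂ (sEl n)
    + lift12 ℂ (CEl n) * lift23 ℂ (sEl n) + lift13 ℂ (CEl n) * lift23 ℂ (sEl n)
    - lift23 ℂ (sEl n) * lift13 ℂ (CEl n) - lift23 ℂ (sEl n) * lift12 ℂ (CEl n)
    - lift13 ℂ (sEl n) * lift12 ℂ (CEl n) - lift23 ℂ (CEl n) * lift13 ℂ (sEl n)
    - lift23 ℂ (CEl n) * lift12 ℂ (sEl n) - lift13 ℂ (CEl n) * lift12 ℂ (sEl n)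
    = 2 • (lift12 ℂ (sEl n) * lift13 ℂ (CEl n) * lift23 ℂ (CEl n)
      + lift12 ℂ (CEl n) * lift13 ℂ (sEl n) * lift23 ℂ (CEl n)
      + lift12 ℂ (CEl n) * lift13 ℂ (CEl n) * lift23 ℂ (sEl n)
      - lift23 ℂ (sEl n) * lift13 ℂ (CEl n) * lift12 ℂ (CEl n)
      - lift23 ℂ (CEl n) * lift13 ℂ (sEl n) * lift12 ℂ (CEl n)
      - lift23 ℂ (CEl n) * lift13 ℂ (CEl n) * lift12 ℂ (sEl n)) := by
  rw [lift12_CEl, lift13_CEl, lift23_CEl]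
  ext x y
  simp only [Matrix.add_apply, Matrix.sub_apply, Matrix.smul_apply,
    Matrix.mul_diagonal, Matrix.diagonal_mul, Matrix.diagonal_mul_diagonal,
    Pi.mul_apply, nsmul_eq_mul, Nat.cast_ofNat]
  linear_combination key12 x y + key13 x y + key23 x y
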